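/- Let F : C → D be an exact functor between abelian categories with right adjoint G, and suppose the derived unit of adjunction η : id → RG ∘ F is an isomorphism on an object N of D^+(C). If F(N) admits an injective resolution of length ≤ k in D, then N admits an injective resolution of length ≤ k in C. In particular, injdim_C(N) ≤ injdim_D(F N). -/

import Mathlib

open CategoryTheory

/-- `injDimLE M n` : `M` admits an injective resolution of length at most `n`
(i.e. the injective dimension of `M` is at most `n`). -/
def injDimLE {C : Type*} [Category C] [Abelian C] (M : C) (n : ℕ) : Prop :=
  ∃ I : InjectiveResolution M, ∀ i, n < i → Limits.IsZero (I.cocomplex.X i)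

open Limits in
/-- Let `F : C ⥤ D` be an exact functor between abelian categories with right
adjoint `G`, and let `N` be an object of `C` on which the derived unit of adjunction
`η : N → RG(F N)` is an isomorphism (equivalently, the unit `N → G(F N)` is an isomorphism and
`R^iG(F N) = 0` for `i > 0`). If `F N` admits an injective resolution of length `≤ k` in `D`,
then `N` admits an injective resolution of length `≤ k` in `C`; in particular
`injdim_C(N) ≤ injdim_D(F N)`. -/
theorem injDim_le_of_derived_unit_iso
    {C D : Type*} [Category C] [Category D] [Abelian C] [Abelian D]
    [EnoughInjectives C] [EnoughInjectives D]
    (F : C ⥤ D) [F.Additive] [PreservesFiniteLimits F] [PreservesFiniteColimits F]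
    (G : D ⥤ C) [G.Additive] (adj : F ⊣ G) (N : C)
    (h0 : IsIso (adj.unit.app N))
    (hi : ∀ i : ℕ, 0 < i → IsZero ((G.rightDerived i).obj (F.obj N)))
    (k : ℕ) (hk : injDimLE (F.obj N) k) :
    injDimLE N k := by
  obtain ⟨I, hI⟩ := hk
  have : PreservesLimits G := adj.rightAdjoint_preservesLimits
  -- the candidate complex: `G` applied to `I.cocomplex`
  set J : CochainComplex C ℕ := (G.mapHomologicalComplex (ComplexShape.up ℕ)).obj I.cocomplex
    with hJ
  have hJX : ∀ n, J.X n = G.obj (I.cocomplex.X n) := fun n => rfl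
  have hJd : ∀ m n, J.d m n = G.map (I.cocomplex.d m n) := fun m n => rfl
  -- the map in degree 0
  let f0 : N ⟶ J.X 0 := adj.unit.app N ≫ G.map (I.ι.f 0)
  have hf0 : f0 ≫ J.d 0 1 = 0 := by
    dsimp only [f0]
    erw [Category.assoc, hJd, ← G.map_comp, I.ι_f_zero_comp_complex_d, G.map_zero, comp_zero]
  let ι : (CochainComplex.single₀ C).obj N ⟶ J :=
    (CochainComplex.fromSingle₀Equiv J N).symm ⟨f0, hf0⟩
  have hι0 : ι.f 0 = f0 := CochainComplex.fromSingle₀Equiv_symm_apply_f_zero f0 hf0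
  -- `N` is the kernel of `J.d 0 1`
  have hker : IsLimit (KernelFork.ofι (G.map (I.ι.f 0))
      (show G.map (I.ι.f 0) ≫ J.d 0 1 = 0 by
        erw [hJd, ← G.map_comp, I.ι_f_zero_comp_complex_d, G.map_zero]; rfl)) :=
    isLimitForkMapOfIsLimit' G I.ι_f_zero_comp_complex_d I.isLimitKernelFork
  have hker' : IsLimit (KernelFork.ofι f0 hf0) := by
    refine IsLimit.ofIsoLimit hker (Fork.ext (asIso (adj.unit.app N)).symm ?_)
    dsimp [f0]
    rw [IsIso.inv_comp_eq]
    rfl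
  have hmono : Mono f0 := by
    have : Mono (G.map (I.ι.f 0)) := mono_of_isLimit_fork hker
    exact @mono_comp _ _ _ _ _ (adj.unit.app N) _ (G.map (I.ι.f 0)) this
  have hqis : QuasiIso ι := by
    refine ⟨fun n => ?_⟩
    match n with
    | 0 =>
      rw [CochainComplex.quasiIsoAt₀_iff, ShortComplex.quasiIso_iff_of_zeros]
      · constructor
        · refine ShortComplex.exact_of_f_is_kernel _ ?_
          refine IsLimit.ofIsoLimit hker' (Fork.ext (Iso.refl _) ?_)
          dsimp
          erw [Category.id_comp]
          exact hι0
        · change Mono (ι.f 0)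
          rw [hι0]
          exact hmono
      · rfl
      · rfl
      · show J.d 0 0 = 0
        rw [hJd, I.cocomplex.shape 0 0 (by simp), G.map_zero]
        rfl
    | (n + 1) =>
      rw [quasiIsoAt_iff_exactAt ι (n + 1) (CochainComplex.exactAt_succ_single_obj _ _)]
      rw [HomologicalComplex.exactAt_iff_isZero_homology]
      exact (hi (n + 1) n.succ_pos).of_iso (I.isoRightDerivedObj G (n + 1)).symm
  refine ⟨{ cocomplex := J
            injective := fun n => Injective.injective_of_adjoint adj _
            ι := ι
            quasiIso := hqis }, fun i hik => ?_⟩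
  exact G.map_isZero (hI i hik)
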